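/- Conditional independence implied by a second-level causal model: if X₁ = φ₁(U₁), X₂ = φ₂(U₂), X₃ = φ₃(U₃,X₁,X₂), X₄ = φ₄(U₄,X₁) with U₁,...,U₄ independent, then X₃ and X₄ are independent conditionally on X₁, i.e. P(X₄ = x₄ | X₁ = x₁, X₃ = x₃) = P(X₄ = x₄ | X₁ = x₁) whenever P(X₁=x₁, X₃=x₃) > 0. -/

import Mathlib

open MeasureTheory ProbabilityTheory

/-- Conditional independence implied by a second-level causal model: with
`X₁ = φ₁(U₁)`, `X₂ = φ₂(U₂)`, `X₃ = φ₃(U₃,X₁,X₂)`, `X₄ = φ₄(U₄,X₁)` and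
`U₁,...,U₄` independent, `X₃` and `X₄` are independent given `X₁`. -/
theorem second_level_conditional_independence
    {Ω 𝒳₁ 𝒳₂ 𝒳₃ 𝒳₄ : Type*} [MeasurableSpace Ω]
    [MeasurableSpace 𝒳₁] [MeasurableSingletonClass 𝒳₁] [Countable 𝒳₁]
    [MeasurableSpace 𝒳₂] [MeasurableSingletonClass 𝒳₂] [Countable 𝒳₂]
    [MeasurableSpace 𝒳₃] [MeasurableSingletonClass 𝒳₃] [Countable 𝒳₃]
    [MeasurableSpace 𝒳₄] [MeasurableSingletonClass 𝒳₄] [Countable 𝒳₄]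
    (μ : Measure Ω) [IsProbabilityMeasure μ]
    (U : Fin 4 → Ω → ℝ) (hU : ∀ i, Measurable (U i))
    (hindep : iIndepFun U μ)
    (φ₁ : ℝ → 𝒳₁) (φ₂ : ℝ → 𝒳₂) (φ₃ : ℝ → 𝒳₁ → 𝒳₂ → 𝒳₃) (φ₄ : ℝ → 𝒳₁ → 𝒳₄)
    (hφ₁ : Measurable φ₁) (hφ₂ : Measurable φ₂)
    (hφ₃ : Measurable fun p : ℝ × 𝒳₁ × 𝒳₂ => φ₃ p.1 p.2.1 p.2.2)
    (hφ₄ : Measurable fun p : ℝ × 𝒳₁ => φ₄ p.1 p.2)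
    (X₁ : Ω → 𝒳₁) (hX₁ : ∀ ω, X₁ ω = φ₁ (U 0 ω))
    (X₂ : Ω → 𝒳₂) (hX₂ : ∀ ω, X₂ ω = φ₂ (U 1 ω))
    (X₃ : Ω → 𝒳₃) (hX₃ : ∀ ω, X₃ ω = φ₃ (U 2 ω) (X₁ ω) (X₂ ω))
    (X₄ : Ω → 𝒳₄) (hX₄ : ∀ ω, X₄ ω = φ₄ (U 3 ω) (X₁ ω)) :
    ∀ (x₁ : 𝒳₁) (x₃ : 𝒳₃) (x₄ : 𝒳₄),
      0 < μ {ω | X₁ ω = x₁ ∧ X₃ ω = x₃} →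
      μ[|{ω | X₁ ω = x₁ ∧ X₃ ω = x₃}] {ω | X₄ ω = x₄}
        = μ[|{ω | X₁ ω = x₁}] {ω | X₄ ω = x₄} := by

  intro x₁ x₃ x₄ hpos
  set S₀ : Set ℝ := φ₁ ⁻¹' {x₁} with hS₀
  set S₃ : Set ℝ := (fun r => φ₄ r x₁) ⁻¹' {x₄} with hS₃
  set T : Set (ℝ × ℝ) := (fun p : ℝ × ℝ => φ₃ p.2 x₁ (φ₂ p.1)) ⁻¹' {x₃} with hT
  have mS₀ : MeasurableSet S₀ := hφ₁ (measurableSet_singleton x₁)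
  have mS₃ : MeasurableSet S₃ :=
    (hφ₄.comp (measurable_id.prodMk measurable_const)) (measurableSet_singleton x₄)
  have mT : MeasurableSet T :=
    (hφ₃.comp ((measurable_snd).prodMk
      (measurable_const.prodMk (hφ₂.comp measurable_fst)))) (measurableSet_singleton x₃)
  set E₀ : Set Ω := U 0 ⁻¹' S₀ with hE₀
  set E₁₂ : Set Ω := (fun ω => (U 1 ω, U 2 ω)) ⁻¹' T with hE₁₂
  set E₃ : Set Ω := U 3 ⁻¹' S₃ with hE₃
  have mE₀ : MeasurableSet E₀ := (hU 0) mS₀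
  have mE₁₂ : MeasurableSet E₁₂ := (((hU 1).prodMk (hU 2))) mT
  have hA1 : {ω | X₁ ω = x₁} = E₀ := by
    ext ω; simp [hE₀, hS₀, hX₁ ω, Set.mem_setOf_eq]
  have hA13 : {ω | X₁ ω = x₁ ∧ X₃ ω = x₃} = E₀ ∩ E₁₂ := by
    ext ω
    simp only [Set.mem_setOf_eq, Set.mem_inter_iff, hE₀, hE₁₂, hS₀, hT,
      Set.mem_preimage, Set.mem_singleton_iff, hX₁ ω, hX₃ ω, hX₂ ω]
    constructor
    · rintro ⟨h1, h3⟩; rw [h1] at h3; exact ⟨h1, h3⟩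
    · rintro ⟨h1, h3⟩; rw [h1]; exact ⟨rfl, h3⟩
  have hA4 : {ω | X₁ ω = x₁} ∩ {ω | X₄ ω = x₄} = E₀ ∩ E₃ := by
    ext ω
    simp only [Set.mem_setOf_eq, Set.mem_inter_iff, hE₀, hE₃, hS₀, hS₃,
      Set.mem_preimage, Set.mem_singleton_iff, hX₁ ω, hX₄ ω]
    constructor
    · rintro ⟨h1, h4⟩; rw [h1] at h4; exact ⟨h1, h4⟩
    · rintro ⟨h1, h4⟩; rw [h1]; exact ⟨rfl, h4⟩
  have hA134 : {ω | X₁ ω = x₁ ∧ X₃ ω = x₃} ∩ {ω | X₄ ω = x₄} = (E₀ ∩ E₃) ∩ E₁₂ := by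
    ext ω
    simp only [Set.mem_setOf_eq, Set.mem_inter_iff, hE₀, hE₃, hE₁₂, hS₀, hS₃, hT,
      Set.mem_preimage, Set.mem_singleton_iff, hX₁ ω, hX₃ ω, hX₂ ω, hX₄ ω]
    constructor
    · rintro ⟨⟨h1, h3⟩, h4⟩; rw [h1] at h3 h4; exact ⟨⟨h1, h4⟩, h3⟩
    · rintro ⟨⟨h1, h4⟩, h3⟩; rw [h1]; exact ⟨⟨rfl, h3⟩, h4⟩
  have hI1 : IndepFun (U 0) (fun ω => (U 1 ω, U 2 ω)) μ :=
    (hindep.indepFun_prodMk hU 1 2 0 (by decide) (by decide)).symm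
  have hI2 : IndepFun (fun ω => (U 0 ω, U 3 ω)) (fun ω => (U 1 ω, U 2 ω)) μ :=
    hindep.indepFun_prodMk_prodMk hU 0 3 1 2 (by decide) (by decide) (by decide) (by decide)
  have hI3 : IndepFun (U 0) (U 3) μ := hindep.indepFun (by decide : (0 : Fin 4) ≠ 3)
  have m1 : μ (E₀ ∩ E₁₂) = μ E₀ * μ E₁₂ :=
    hI1.measure_inter_preimage_eq_mul S₀ T mS₀ mT
  have hpre : (fun ω => (U 0 ω, U 3 ω)) ⁻¹' (S₀ ×ˢ S₃) = E₀ ∩ E₃ := by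
    ext ω; simp [hE₀, hE₃, Set.mem_prod]
  have m2 : μ ((E₀ ∩ E₃) ∩ E₁₂) = μ (E₀ ∩ E₃) * μ E₁₂ := by
    rw [← hpre]; exact hI2.measure_inter_preimage_eq_mul (S₀ ×ˢ S₃) T (mS₀.prod mS₃) mT
  have m3 : μ (E₀ ∩ E₃) = μ E₀ * μ E₃ :=
    hI3.measure_inter_preimage_eq_mul S₀ S₃ mS₀ mS₃
  rw [hA13] at hpos
  have hne : μ (E₀ ∩ E₁₂) ≠ 0 := hpos.ne'
  rw [m1] at hne
  have h0 : μ E₀ ≠ 0 := fun h => hne (by rw [h, zero_mul])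
  have h12 : μ E₁₂ ≠ 0 := fun h => hne (by rw [h, mul_zero])
  have h0fin : μ E₀ ≠ ⊤ := (measure_lt_top μ _).ne
  have h12fin : μ E₁₂ ≠ ⊤ := (measure_lt_top μ _).ne
  rw [cond_apply (hA13 ▸ (mE₀.inter mE₁₂)), cond_apply (hA1 ▸ mE₀), hA134, hA4, hA13, hA1,
    m2, m3, m1]
  rw [ENNReal.mul_inv (Or.inl h0) (Or.inl h0fin),
    show (μ E₀)⁻¹ * (μ E₁₂)⁻¹ * (μ E₀ * μ E₃ * μ E₁₂)
      = ((μ E₀)⁻¹ * μ E₀) * (((μ E₁₂)⁻¹ * μ E₁₂) * μ E₃) from by ring,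
    ENNReal.inv_mul_cancel h0 h0fin, ENNReal.inv_mul_cancel h12 h12fin,
    one_mul, one_mul, ← mul_assoc, ENNReal.inv_mul_cancel h0 h0fin, one_mul]
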